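/- For every integer k ≥ 1, let G be the graph obtained from the disjoint union of k copies of the 5-cycle C_5 by adding one new vertex adjacent to exactly one vertex of each of the k cycles. Then γ'_R(G) = 4k = (4/5)·|V(G)| − 4/5. -/

import Mathlib

open Finset SimpleGraph

/-- An edge Roman dominating function: values in {0,1,2} on edges (0 elsewhere),
and every edge with value 0 is adjacent to a distinct edge with value 2
sharing an endpoint with it. -/
def EdgeRDF {V : Type*} (G : SimpleGraph V) (f : Sym2 V → ℕ) : Prop :=
  (∀ e, f e ≤ 2) ∧ (∀ e, e ∉ G.edgeSet → f e = 0) ∧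
  (∀ e ∈ G.edgeSet, f e = 0 →
    ∃ e' ∈ G.edgeSet, f e' = 2 ∧ e' ≠ e ∧ ∃ v, v ∈ e ∧ v ∈ e')

/-- The edge Roman domination number: the minimum weight of an
edge Roman dominating function. -/
noncomputable def edgeRomanNumber (V : Type*) [Fintype V] [DecidableEq V]
    (G : SimpleGraph V) : ℕ :=
  sInf {w | ∃ f : Sym2 V → ℕ, EdgeRDF G f ∧ w = ∑ e : Sym2 V, f e}


/-- The graph obtained from the disjoint union of `k` copies of the 5-cycle `C₅` by
adding one new vertex (`none`) adjacent to exactly one vertex of each of the `k` cycles. -/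
def flowerC5 (k : ℕ) : SimpleGraph (Option (Fin k × Fin 5)) :=
  SimpleGraph.fromRel fun a b =>
    (∃ (i : Fin k) (x y : Fin 5),
        a = some (i, x) ∧ b = some (i, y) ∧ (cycleGraph 5).Adj x y) ∨
    (∃ i : Fin k, a = none ∧ b = some (i, 0))

/-! ### Auxiliary definitions -/

/-- A cycle edge of the `i`-th copy. -/
def fce {k : ℕ} (i : Fin k) (x y : Fin 5) : Sym2 (Option (Fin k × Fin 5)) :=
  s(some (i, x), some (i, y))

/-- The spoke edge of the `i`-th copy. -/
def fsp {k : ℕ} (i : Fin k) : Sym2 (Option (Fin k × Fin 5)) :=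
  s(none, some (i, 0))

lemma fce_swap {k : ℕ} (i : Fin k) (x y : Fin 5) : fce i x y = fce i y x :=
  Sym2.eq_swap

lemma flower_edge_iff {k : ℕ} {e : Sym2 (Option (Fin k × Fin 5))} :
    e ∈ (flowerC5 k).edgeSet ↔
      ∃ i, (∃ x y, (cycleGraph 5).Adj x y ∧ e = fce i x y) ∨ e = fsp i := by
  induction e using Sym2.inductionOn with
  | hf a b =>
    rw [mem_edgeSet, flowerC5, fromRel_adj]
    constructor
    · rintro ⟨hne, (⟨i, x, y, rfl, rfl, hadj⟩ | ⟨i, rfl, rfl⟩) |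
        (⟨i, x, y, hb, ha, hadj⟩ | ⟨i, hb, ha⟩)⟩
      · exact ⟨i, Or.inl ⟨x, y, hadj, rfl⟩⟩
      · exact ⟨i, Or.inr rfl⟩
      · subst ha; subst hb; exact ⟨i, Or.inl ⟨y, x, hadj.symm, rfl⟩⟩
      · subst ha; subst hb; exact ⟨i, Or.inr Sym2.eq_swap⟩
    · rintro ⟨i, ⟨x, y, hadj, he⟩ | he⟩
      · rw [fce, Sym2.eq_iff] at he
        rcases he with ⟨rfl, rfl⟩ | ⟨rfl, rfl⟩
        · exact ⟨by simp [hadj.ne], Or.inl (Or.inl ⟨i, x, y, rfl, rfl, hadj⟩)⟩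
        · exact ⟨by simp [hadj.ne'], Or.inr (Or.inl ⟨i, x, y, rfl, rfl, hadj⟩)⟩
      · rw [fsp, Sym2.eq_iff] at he
        rcases he with ⟨rfl, rfl⟩ | ⟨rfl, rfl⟩
        · exact ⟨by simp, Or.inl (Or.inr ⟨i, rfl, rfl⟩)⟩
        · exact ⟨by simp, Or.inr (Or.inr ⟨i, rfl, rfl⟩)⟩

lemma fce_mem {k : ℕ} (i : Fin k) {x y : Fin 5} (h : (cycleGraph 5).Adj x y) :
    fce i x y ∈ (flowerC5 k).edgeSet :=
  flower_edge_iff.mpr ⟨i, Or.inl ⟨x, y, h, rfl⟩⟩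

lemma fsp_mem {k : ℕ} (i : Fin k) : fsp i ∈ (flowerC5 k).edgeSet :=
  flower_edge_iff.mpr ⟨i, Or.inr rfl⟩

lemma flower_incident {k : ℕ} {i : Fin k} {x : Fin 5} {e : Sym2 (Option (Fin k × Fin 5))}
    (he : e ∈ (flowerC5 k).edgeSet) (hv : (some (i, x) : Option (Fin k × Fin 5)) ∈ e) :
    (∃ z, (cycleGraph 5).Adj x z ∧ e = fce i x z) ∨ (x = 0 ∧ e = fsp i) := by
  obtain ⟨j, h⟩ := flower_edge_iff.mp he
  rcases h with ⟨a, b, hadj, rfl⟩ | rfl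
  · rw [fce, Sym2.mem_iff] at hv
    rcases hv with h | h
    · obtain ⟨rfl, rfl⟩ : i = j ∧ x = a := by simpa using h
      exact Or.inl ⟨b, hadj, rfl⟩
    · obtain ⟨rfl, rfl⟩ : i = j ∧ x = b := by simpa using h
      exact Or.inl ⟨a, hadj.symm, Sym2.eq_swap⟩
  · rw [fsp, Sym2.mem_iff] at hv
    rcases hv with h | h
    · exact absurd h (by simp)
    · obtain ⟨rfl, rfl⟩ : i = j ∧ x = 0 := by simpa using h
      exact Or.inr ⟨rfl, rfl⟩

lemma zero_step {k : ℕ} {f : Sym2 (Option (Fin k × Fin 5)) → ℕ}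
    (hf : EdgeRDF (flowerC5 k) f) {i : Fin k} {x y : Fin 5}
    (hadj : (cycleGraph 5).Adj x y) (h0 : f (fce i x y) = 0) :
    (∃ z, (cycleGraph 5).Adj x z ∧ z ≠ y ∧ f (fce i x z) = 2) ∨
    (∃ z, (cycleGraph 5).Adj y z ∧ z ≠ x ∧ f (fce i y z) = 2) ∨
    (x = 0 ∧ f (fsp i) = 2) ∨ (y = 0 ∧ f (fsp i) = 2) := by
  obtain ⟨e', he', h2, hne, v, hv, hv'⟩ := hf.2.2 _ (fce_mem i hadj) h0
  rw [fce, Sym2.mem_iff] at hv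
  rcases hv with rfl | rfl
  · rcases flower_incident he' hv' with ⟨z, hz, rfl⟩ | ⟨hx0, rfl⟩
    · exact Or.inl ⟨z, hz, fun h => hne (by rw [h]), h2⟩
    · exact Or.inr (Or.inr (Or.inl ⟨hx0, h2⟩))
  · rcases flower_incident he' hv' with ⟨z, hz, rfl⟩ | ⟨hy0, rfl⟩
    · refine Or.inr (Or.inl ⟨z, hz, ?_, h2⟩)
      rintro rfl
      exact hne (fce_swap i y z)
    · exact Or.inr (Or.inr (Or.inr ⟨hy0, h2⟩))

lemma copy_bound {k : ℕ} {f : Sym2 (Option (Fin k × Fin 5)) → ℕ}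
    (hf : EdgeRDF (flowerC5 k) f) (i : Fin k) :
    4 ≤ f (fce i 0 1) + f (fce i 1 2) + f (fce i 2 3) + f (fce i 3 4) +
        f (fce i 4 0) + f (fsp i) := by
  have h01 : f (fce i 0 1) = 0 → f (fce i 1 2) = 2 ∨ f (fce i 4 0) = 2 ∨ f (fsp i) = 2 := by
    intro h0
    rcases zero_step hf (by decide) h0 with ⟨z, hz, hne, h2⟩ | ⟨z, hz, hne, h2⟩ | ⟨_, h2⟩ | ⟨h, _⟩
    · have hz4 : z = 4 := (by decide : ∀ z : Fin 5, (cycleGraph 5).Adj 0 z → z ≠ 1 → z = 4) z hz hne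
      subst hz4; rw [fce_swap] at h2; exact Or.inr (Or.inl h2)
    · have hz2 : z = 2 := (by decide : ∀ z : Fin 5, (cycleGraph 5).Adj 1 z → z ≠ 0 → z = 2) z hz hne
      subst hz2; exact Or.inl h2
    · exact Or.inr (Or.inr h2)
    · exact absurd h (by decide)
  have h12 : f (fce i 1 2) = 0 → f (fce i 0 1) = 2 ∨ f (fce i 2 3) = 2 := by
    intro h0
    rcases zero_step hf (by decide) h0 with ⟨z, hz, hne, h2⟩ | ⟨z, hz, hne, h2⟩ | ⟨h, _⟩ | ⟨h, _⟩
    · have hz' : z = 0 := (by decide : ∀ z : Fin 5, (cycleGraph 5).Adj 1 z → z ≠ 2 → z = 0) z hz hne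
      subst hz'; rw [fce_swap] at h2; exact Or.inl h2
    · have hz' : z = 3 := (by decide : ∀ z : Fin 5, (cycleGraph 5).Adj 2 z → z ≠ 1 → z = 3) z hz hne
      subst hz'; exact Or.inr h2
    · exact absurd h (by decide)
    · exact absurd h (by decide)
  have h23 : f (fce i 2 3) = 0 → f (fce i 1 2) = 2 ∨ f (fce i 3 4) = 2 := by
    intro h0
    rcases zero_step hf (by decide) h0 with ⟨z, hz, hne, h2⟩ | ⟨z, hz, hne, h2⟩ | ⟨h, _⟩ | ⟨h, _⟩
    · have hz' : z = 1 := (by decide : ∀ z : Fin 5, (cycleGraph 5).Adj 2 z → z ≠ 3 → z = 1) z hz hne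
      subst hz'; rw [fce_swap] at h2; exact Or.inl h2
    · have hz' : z = 4 := (by decide : ∀ z : Fin 5, (cycleGraph 5).Adj 3 z → z ≠ 2 → z = 4) z hz hne
      subst hz'; exact Or.inr h2
    · exact absurd h (by decide)
    · exact absurd h (by decide)
  have h34 : f (fce i 3 4) = 0 → f (fce i 2 3) = 2 ∨ f (fce i 4 0) = 2 := by
    intro h0
    rcases zero_step hf (by decide) h0 with ⟨z, hz, hne, h2⟩ | ⟨z, hz, hne, h2⟩ | ⟨h, _⟩ | ⟨h, _⟩
    · have hz' : z = 2 := (by decide : ∀ z : Fin 5, (cycleGraph 5).Adj 3 z → z ≠ 4 → z = 2) z hz hne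
      subst hz'; rw [fce_swap] at h2; exact Or.inl h2
    · have hz' : z = 0 := (by decide : ∀ z : Fin 5, (cycleGraph 5).Adj 4 z → z ≠ 3 → z = 0) z hz hne
      subst hz'; exact Or.inr h2
    · exact absurd h (by decide)
    · exact absurd h (by decide)
  have h40 : f (fce i 4 0) = 0 → f (fce i 3 4) = 2 ∨ f (fce i 0 1) = 2 ∨ f (fsp i) = 2 := by
    intro h0
    rcases zero_step hf (by decide) h0 with ⟨z, hz, hne, h2⟩ | ⟨z, hz, hne, h2⟩ | ⟨h, _⟩ | ⟨_, h2⟩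
    · have hz' : z = 3 := (by decide : ∀ z : Fin 5, (cycleGraph 5).Adj 4 z → z ≠ 0 → z = 3) z hz hne
      subst hz'; rw [fce_swap] at h2; exact Or.inl h2
    · have hz' : z = 1 := (by decide : ∀ z : Fin 5, (cycleGraph 5).Adj 0 z → z ≠ 4 → z = 1) z hz hne
      subst hz'; exact Or.inr (Or.inl h2)
    · exact absurd h (by decide)
    · exact Or.inr (Or.inr h2)
  have b1 := hf.1 (fce i 0 1)
  have b2 := hf.1 (fce i 1 2)
  have b3 := hf.1 (fce i 2 3)
  have b4 := hf.1 (fce i 3 4)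
  have b5 := hf.1 (fce i 4 0)
  have b6 := hf.1 (fsp i)
  omega

/-! ### The upper-bound construction -/

/-- The set of edges assigned value 2. -/
def fT2 (k : ℕ) : Finset (Sym2 (Option (Fin k × Fin 5))) :=
  Finset.univ.biUnion fun i => {fce i 0 1, fce i 2 3}

lemma mem_fT2 {k : ℕ} {e : Sym2 (Option (Fin k × Fin 5))} :
    e ∈ fT2 k ↔ ∃ i, e = fce i 0 1 ∨ e = fce i 2 3 := by
  simp [fT2]

/-- The optimal edge Roman dominating function. -/
def fupper (k : ℕ) : Sym2 (Option (Fin k × Fin 5)) → ℕ :=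
  fun e => if e ∈ fT2 k then 2 else 0

lemma adj5_cases : ∀ x y : Fin 5, (cycleGraph 5).Adj x y →
    (x = 0 ∧ y = 1) ∨ (x = 1 ∧ y = 0) ∨ (x = 1 ∧ y = 2) ∨ (x = 2 ∧ y = 1) ∨
    (x = 2 ∧ y = 3) ∨ (x = 3 ∧ y = 2) ∨ (x = 3 ∧ y = 4) ∨ (x = 4 ∧ y = 3) ∨
    (x = 4 ∧ y = 0) ∨ (x = 0 ∧ y = 4) := by decide

lemma fupper_RDF (k : ℕ) : EdgeRDF (flowerC5 k) (fupper k) := by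
  have hmem01 : ∀ i : Fin k, fce i 0 1 ∈ fT2 k := fun i => mem_fT2.mpr ⟨i, Or.inl rfl⟩
  have hmem23 : ∀ i : Fin k, fce i 2 3 ∈ fT2 k := fun i => mem_fT2.mpr ⟨i, Or.inr rfl⟩
  have h2a : ∀ i : Fin k, fupper k (fce i 0 1) = 2 := fun i => if_pos (hmem01 i)
  have h2b : ∀ i : Fin k, fupper k (fce i 2 3) = 2 := fun i => if_pos (hmem23 i)
  refine ⟨fun e => ?_, fun e he => ?_, fun e he h0 => ?_⟩
  · unfold fupper; split <;> omega
  · unfold fupper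
    rw [if_neg]
    intro hmem
    apply he
    rcases mem_fT2.mp hmem with ⟨i, rfl | rfl⟩
    · exact fce_mem i (by decide)
    · exact fce_mem i (by decide)
  · have h0' : e ∉ fT2 k := by
      intro h
      rw [show fupper k e = 2 from if_pos h] at h0
      exact absurd h0 (by decide)
    rcases flower_edge_iff.mp he with ⟨i, ⟨x, y, hadj, rfl⟩ | rfl⟩
    · rcases adj5_cases x y hadj with ⟨rfl, rfl⟩ | ⟨rfl, rfl⟩ | ⟨rfl, rfl⟩ | ⟨rfl, rfl⟩ |
        ⟨rfl, rfl⟩ | ⟨rfl, rfl⟩ | ⟨rfl, rfl⟩ | ⟨rfl, rfl⟩ | ⟨rfl, rfl⟩ | ⟨rfl, rfl⟩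
      · exact absurd (hmem01 i) h0'
      · exact absurd (fce_swap i 1 0 ▸ hmem01 i) h0'
      · exact ⟨fce i 0 1, fce_mem i (by decide), h2a i, by simp [fce],
          some (i, 1), by simp [fce], by simp [fce]⟩
      · exact ⟨fce i 0 1, fce_mem i (by decide), h2a i, by simp [fce],
          some (i, 1), by simp [fce], by simp [fce]⟩
      · exact absurd (hmem23 i) h0'
      · exact absurd (fce_swap i 3 2 ▸ hmem23 i) h0'
      · exact ⟨fce i 2 3, fce_mem i (by decide), h2b i, by simp [fce],
          some (i, 3), by simp [fce], by simp [fce]⟩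
      · exact ⟨fce i 2 3, fce_mem i (by decide), h2b i, by simp [fce],
          some (i, 3), by simp [fce], by simp [fce]⟩
      · exact ⟨fce i 0 1, fce_mem i (by decide), h2a i, by simp [fce],
          some (i, 0), by simp [fce], by simp [fce]⟩
      · exact ⟨fce i 0 1, fce_mem i (by decide), h2a i, by simp [fce],
          some (i, 0), by simp [fce], by simp [fce]⟩
    · exact ⟨fce i 0 1, fce_mem i (by decide), h2a i, by simp [fce, fsp],
        some (i, 0), by simp [fsp], by simp [fce]⟩

lemma fT2_card (k : ℕ) : (fT2 k).card = 2 * k := by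
  rw [fT2, Finset.card_biUnion]
  · simp [Finset.card_insert_of_notMem, fce, mul_comm]
  · intro i _ j _ hij
    rw [Function.onFun, Finset.disjoint_left]
    intro e he1 he2
    apply hij
    simp only [Finset.mem_insert, Finset.mem_singleton] at he1 he2
    rcases he1 with rfl | rfl <;> rcases he2 with h | h <;>
      · rw [fce, fce, Sym2.eq_iff] at h
        rcases h with ⟨h, _⟩ | ⟨h, _⟩ <;> exact congrArg Prod.fst (Option.some.inj h)

lemma fupper_sum (k : ℕ) : ∑ e : Sym2 (Option (Fin k × Fin 5)), fupper k e = 4 * k := by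
  unfold fupper
  rw [Finset.sum_ite_mem, Finset.univ_inter, Finset.sum_const, fT2_card, smul_eq_mul]
  ring

/-! ### Lower bound: sum decomposition -/

/-- The six edges belonging to the `i`-th copy. -/
def fS {k : ℕ} (i : Fin k) : Finset (Sym2 (Option (Fin k × Fin 5))) :=
  {fce i 0 1, fce i 1 2, fce i 2 3, fce i 3 4, fce i 4 0, fsp i}

lemma fS_wit {k : ℕ} {i : Fin k} {e : Sym2 (Option (Fin k × Fin 5))} (he : e ∈ fS i) :
    ∃ x : Fin 5, (some (i, x) : Option (Fin k × Fin 5)) ∈ e := by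
  simp only [fS, Finset.mem_insert, Finset.mem_singleton] at he
  rcases he with rfl | rfl | rfl | rfl | rfl | rfl
  · exact ⟨0, by simp [fce]⟩
  · exact ⟨1, by simp [fce]⟩
  · exact ⟨2, by simp [fce]⟩
  · exact ⟨3, by simp [fce]⟩
  · exact ⟨4, by simp [fce]⟩
  · exact ⟨0, by simp [fsp]⟩

lemma fS_tag {k : ℕ} {j : Fin k} {e : Sym2 (Option (Fin k × Fin 5))} (he : e ∈ fS j)
    {i : Fin k} {x : Fin 5} (hm : (some (i, x) : Option (Fin k × Fin 5)) ∈ e) : i = j := by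
  simp only [fS, Finset.mem_insert, Finset.mem_singleton] at he
  rcases he with rfl | rfl | rfl | rfl | rfl | rfl <;>
    rcases Sym2.mem_iff.mp hm with h | h <;>
    first
      | exact congrArg Prod.fst (Option.some.inj h)
      | exact absurd h (by simp)

lemma fS_disjoint {k : ℕ} :
    ((Finset.univ : Finset (Fin k)) : Set (Fin k)).PairwiseDisjoint fS := by
  intro i _ j _ hij
  rw [Function.onFun, Finset.disjoint_left]
  intro e he1 he2
  obtain ⟨x, hx⟩ := fS_wit he1
  exact hij (fS_tag he2 hx)

lemma fS_sum {k : ℕ} (f : Sym2 (Option (Fin k × Fin 5)) → ℕ) (i : Fin k) :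
    ∑ e ∈ fS i, f e = f (fce i 0 1) + f (fce i 1 2) + f (fce i 2 3) + f (fce i 3 4) +
        f (fce i 4 0) + f (fsp i) := by
  rw [fS]
  rw [Finset.sum_insert (by simp [fce, fsp]), Finset.sum_insert (by simp [fce, fsp]),
    Finset.sum_insert (by simp [fce, fsp]), Finset.sum_insert (by simp [fce, fsp]),
    Finset.sum_insert (by simp [fce, fsp]), Finset.sum_singleton]
  ring

lemma lower_bound {k : ℕ} {f : Sym2 (Option (Fin k × Fin 5)) → ℕ}
    (hf : EdgeRDF (flowerC5 k) f) : 4 * k ≤ ∑ e : Sym2 (Option (Fin k × Fin 5)), f e := by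
  calc 4 * k = ∑ _i : Fin k, 4 := by simp [mul_comm]
    _ ≤ ∑ i : Fin k, ∑ e ∈ fS i, f e := by
        refine Finset.sum_le_sum fun i _ => ?_
        rw [fS_sum]
        exact copy_bound hf i
    _ = ∑ e ∈ Finset.univ.biUnion fS, f e := (Finset.sum_biUnion fS_disjoint).symm
    _ ≤ ∑ e : Sym2 (Option (Fin k × Fin 5)), f e :=
        Finset.sum_le_sum_of_subset (Finset.subset_univ _)

/-- For `k ≥ 1`, the graph obtained from `k` disjoint 5-cycles by adding a vertex adjacent
to one vertex of each cycle satisfies `γ'_R(G) = 4k = (4/5)·|V(G)| − 4/5`. -/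
theorem edgeRomanNumber_flowerC5 (k : ℕ) (hk : 1 ≤ k) :
    edgeRomanNumber (Option (Fin k × Fin 5)) (flowerC5 k) = 4 * k ∧
    ((4 * k : ℝ) = 4 / 5 * Fintype.card (Option (Fin k × Fin 5)) - 4 / 5) := by
  constructor
  · have hmem : (4 * k : ℕ) ∈
        {w | ∃ f : Sym2 (Option (Fin k × Fin 5)) → ℕ, EdgeRDF (flowerC5 k) f ∧
          w = ∑ e : Sym2 (Option (Fin k × Fin 5)), f e} :=
      ⟨fupper k, fupper_RDF k, (fupper_sum k).symm⟩
    refine le_antisymm (Nat.sInf_le hmem) (le_csInf ⟨_, hmem⟩ ?_)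
    rintro w ⟨f, hf, rfl⟩
    exact lower_bound hf
  · have : Fintype.card (Option (Fin k × Fin 5)) = 5 * k + 1 := by
      simp [Fintype.card_option, mul_comm]
    rw [this]
    push_cast
    ring
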